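/- Let m = c' · n · log(n / log L) / log L for a sufficiently large absolute constant c' > 0, and set r = n/m. If 1 ≤ n < L - 1 and L ≤ 2^(n/16), then C(r + n - 1, r) ≤ L. -/

import Mathlib

set_option maxHeartbeats 1000000

open Real Nat

/-- `k^k ≤ k! * e^k`. -/
lemma aux_pow_le_factorial_mul_exp (k : ℕ) :
    ((k : ℝ)) ^ k ≤ (k ! : ℝ) * Real.exp k := by
  have h := Real.sum_le_exp_of_nonneg (x := (k : ℝ)) (Nat.cast_nonneg k) (k + 1)
  have hterm : ((k : ℝ)) ^ k / (k ! : ℝ) ≤ Real.exp k := by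
    refine le_trans ?_ h
    have : ((k : ℝ)) ^ k / (k ! : ℝ) = ∑ i ∈ Finset.range (k+1),
        (if i = k then ((k : ℝ)) ^ i / (i ! : ℝ) else 0) := by
      rw [Finset.sum_ite_eq' (Finset.range (k+1)) k fun i => ((k : ℝ)) ^ i / (i ! : ℝ)]
      simp
    rw [this]
    apply Finset.sum_le_sum
    intro i _
    split
    · rfl
    · positivity
  have hfac : (0 : ℝ) < (k ! : ℝ) := by exact_mod_cast k.factorial_pos
  calc ((k : ℝ)) ^ k = ((k : ℝ)) ^ k / (k ! : ℝ) * (k ! : ℝ) := by field_simp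
    _ ≤ Real.exp k * (k ! : ℝ) := by
        exact mul_le_mul_of_nonneg_right hterm hfac.le
    _ = (k ! : ℝ) * Real.exp k := by ring

/-- monotonicity of `a ↦ a * log (c / a)` on the relevant range. -/
lemma aux_mono {a b c : ℝ} (ha : 0 < a) (hab : a ≤ b) (hc : Real.exp 1 * b ≤ c) :
    a * Real.log (c / a) ≤ b * Real.log (c / b) := by
  have hb : 0 < b := lt_of_lt_of_le ha hab
  have hc0 : 0 < c := lt_of_lt_of_le (by positivity) hc
  have h1 : 1 ≤ Real.log (c / b) := by
    rw [Real.le_log_iff_exp_le (by positivity)]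
    rw [le_div_iff₀ hb]
    linarith
  have h2 : Real.log (b / a) ≤ b / a - 1 := Real.log_le_sub_one_of_pos (by positivity)
  have h3 : Real.log (c / a) = Real.log (c / b) + Real.log (b / a) := by
    rw [← Real.log_mul (by positivity) (by positivity)]
    congr 1
    field_simp
  rw [h3]
  have h4 : a * (b / a - 1) = b - a := by field_simp
  nlinarith [mul_le_mul_of_nonneg_left h2 ha.le, mul_le_mul_of_nonneg_left h1 (sub_nonneg.mpr hab)]

/-- Supporting computation for Claim 2: taking
`m = c' · n · log(n/log L) / log L` for a sufficiently large absolute constant `c' > 0`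
and `r = n/m`, if `1 ≤ n < L - 1` and `L ≤ 2^(n/16)` then `C(r+n-1, r) ≤ L`
(logs base 2). -/
theorem stmt4 : ∃ c₀ : ℝ, 0 < c₀ ∧ ∀ c' : ℝ, c₀ ≤ c' → ∀ n L : ℕ, 1 ≤ n → n < L - 1 →
    (L : ℝ) ≤ (2 : ℝ) ^ ((n : ℝ) / 16) →
    ((⌊(n : ℝ) / (c' * n * Real.logb 2 ((n : ℝ) / Real.logb 2 L) / Real.logb 2 L)⌋₊
        + n - 1).choose
      ⌊(n : ℝ) / (c' * n * Real.logb 2 ((n : ℝ) / Real.logb 2 L) / Real.logb 2 L)⌋₊ : ℝ)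
      ≤ L := by
  refine ⟨5, by norm_num, ?_⟩
  intro c' hc' n L hn hnL hL2
  have hc'5 : (5 : ℝ) ≤ c' := hc'
  have hc'0 : (0 : ℝ) < c' := by linarith
  have hL3 : 3 ≤ L := by omega
  have hnpos : (0 : ℝ) < n := by exact_mod_cast hn
  set t := Real.logb 2 L with ht_def
  have hLpos : (0 : ℝ) < L := by positivity
  have ht1 : 1 < t := by
    have : Real.logb 2 2 < Real.logb 2 L := by
      apply Real.logb_lt_logb (by norm_num) (by norm_num)
      exact_mod_cast by omega
    simpa using this
  have ht0 : 0 < t := by linarith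
  have ht16 : t ≤ (n : ℝ) / 16 := by
    have : Real.logb 2 (L : ℝ) ≤ Real.logb 2 ((2 : ℝ) ^ ((n : ℝ) / 16)) :=
      Real.logb_le_logb_of_le (by norm_num) hLpos hL2
    rwa [Real.logb_rpow (by norm_num) (by norm_num)] at this
  set s := (n : ℝ) / t with hs_def
  have hs16 : (16 : ℝ) ≤ s := by
    rw [hs_def, le_div_iff₀ ht0]; linarith
  set K := Real.logb 2 s with hK_def
  have hK4 : (4 : ℝ) ≤ K := by
    have : Real.logb 2 ((2:ℝ) ^ (4:ℝ)) ≤ Real.logb 2 s := by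
      apply Real.logb_le_logb_of_le (by norm_num) (by positivity)
      rw [show ((2:ℝ) ^ (4:ℝ)) = 16 by
        rw [show (4:ℝ) = ((4:ℕ):ℝ) by norm_num, Real.rpow_natCast]; norm_num]
      exact hs16
    rwa [Real.logb_rpow (by norm_num) (by norm_num)] at this
  have hK0 : (0 : ℝ) < K := by linarith
  have hXeq : (n : ℝ) / (c' * n * K / t) = t / (c' * K) := by
    field_simp
  rw [hXeq]
  set x := t / (c' * K) with hx_def
  have hx0 : 0 < x := by positivity
  set r := ⌊x⌋₊ with hr_def
  clear_value r
  clear_value x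
  clear_value K
  clear_value s
  clear_value t
  rcases Nat.eq_zero_or_pos r with hr0 | hr1
  · rw [hr0]
    simp only [Nat.zero_add, Nat.choose_zero_right, Nat.cast_one]
    exact_mod_cast by omega
  -- main case: r ≥ 1
  have hrx : (r : ℝ) ≤ x := by rw [hr_def]; exact Nat.floor_le hx0.le
  have hxt : x ≤ t := by
    rw [hx_def, div_le_iff₀ (by positivity)]
    have h20 : (1:ℝ) ≤ c' * K := by
      have h54 : (5:ℝ) * 4 ≤ c' * K := mul_le_mul hc'5 hK4 (by norm_num) (by linarith)
      linarith
    have := mul_le_mul_of_nonneg_left h20 ht0.le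
    linarith
  have hxn : x ≤ (n : ℝ) := by
    calc x ≤ t := hxt
      _ ≤ (n : ℝ) / 16 := ht16
      _ ≤ (n : ℝ) := by linarith
  have hrn : r ≤ n := by
    have : (r : ℝ) ≤ (n : ℝ) := le_trans hrx hxn
    exact_mod_cast this
  have hrpos : (0 : ℝ) < r := by exact_mod_cast hr1
  have hfac : (0 : ℝ) < (r ! : ℝ) := by exact_mod_cast r.factorial_pos
  set e := Real.exp 1 with he_def
  clear_value e
  have he0 : (0 : ℝ) < e := by rw [he_def]; exact Real.exp_pos 1
  have he1 : 1 ≤ e := by rw [he_def]; linarith [Real.add_one_le_exp (1:ℝ), Real.exp_pos (1:ℝ)]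
  set y := 2 * e * (n : ℝ) / r with hy_def
  clear_value y
  have hy0 : 0 < y := by rw [hy_def]; positivity
  -- Step A: choose bound
  have hbase : ((r + n - 1 : ℕ) : ℝ) ≤ 2 * (n : ℝ) := by
    have h := Nat.cast_le (α := ℝ) |>.mpr (show r + n - 1 ≤ 2 * n by omega)
    push_cast at h
    linarith
  have hA : (((r + n - 1).choose r : ℕ) : ℝ) ≤ (2 * (n:ℝ)) ^ r / (r ! : ℝ) := by
    calc (((r + n - 1).choose r : ℕ) : ℝ) ≤ (((r + n - 1 : ℕ) : ℝ)) ^ r / (r ! : ℝ) := by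
          exact_mod_cast Nat.choose_le_pow_div (α := ℝ) r (r + n - 1)
      _ ≤ (2 * (n:ℝ)) ^ r / (r ! : ℝ) := by
          gcongr
  -- Step B: factorial lower bound
  have hB : (2 * (n:ℝ)) ^ r / (r ! : ℝ) ≤ y ^ r := by
    have h1 : ((r : ℝ)) ^ r ≤ (r ! : ℝ) * e ^ r := by
      have := aux_pow_le_factorial_mul_exp r
      rwa [show Real.exp (r:ℝ) = e ^ r by rw [he_def, ← Real.exp_nat_mul, mul_one]] at this
    have hyeq : y ^ r = (2 * (n:ℝ)) ^ r * e ^ r / ((r:ℝ)) ^ r := by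
      rw [hy_def, div_pow]
      ring
    rw [hyeq, div_le_div_iff₀ hfac (by positivity)]
    have h2 : (0:ℝ) ≤ (2 * (n:ℝ)) ^ r := by positivity
    calc (2 * (n:ℝ)) ^ r * (r:ℝ) ^ r ≤ (2 * (n:ℝ)) ^ r * ((r ! : ℝ) * e ^ r) :=
          mul_le_mul_of_nonneg_left h1 h2
      _ = (2 * (n:ℝ)) ^ r * e ^ r * (r ! : ℝ) := by ring
  -- Step C : y ^ r ≤ L via logs
  have hn_st : (n : ℝ) = s * t := by rw [hs_def]; field_simp
  have hcx : 2 * e * (n : ℝ) / x = 2 * e * c' * K * s := by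
    rw [hx_def, hn_st]
    field_simp
  have hcore : Real.log (2 * e * c' * K * s) ≤ c' * K * Real.log 2 := by
    set l2 := Real.log 2 with hl2_def
    set u := Real.log s with hu_def
    have hl2a : (0.6931471803 : ℝ) < l2 := Real.log_two_gt_d9
    have hl2b : l2 < 0.6931471808 := Real.log_two_lt_d9
    have hl20 : (0:ℝ) < l2 := by linarith
    have hKl2 : K * l2 = u := by
      rw [hK_def, Real.logb, hu_def]
      field_simp
      rw [hl2_def]
    have hu4 : 4 * l2 ≤ u := by
      have : Real.log (16 : ℝ) ≤ Real.log s := Real.log_le_log (by norm_num) hs16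
      rw [show (16:ℝ) = 2 ^ (4:ℕ) by norm_num, Real.log_pow] at this
      push_cast at this
      linarith
    have hu0 : (0:ℝ) < u := by linarith
    have hKu : K = u / l2 := by
      rw [hK_def, Real.logb, hu_def]
    have hsplit : Real.log (2 * e * c' * K * s)
        = l2 + 1 + Real.log c' + Real.log K + u := by
      rw [show 2 * e * c' * K * s = 2 * (e * (c' * (K * s))) by ring,
        Real.log_mul (by norm_num) (by positivity),
        Real.log_mul (by positivity) (by positivity),
        Real.log_mul (by positivity) (by positivity),
        Real.log_mul (by positivity) (by positivity)]
      rw [he_def, Real.log_exp, hu_def, hl2_def]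
      ring
    have hlogc : Real.log c' ≤ c' - 1 := Real.log_le_sub_one_of_pos hc'0
    have hlogu : Real.log u ≤ u - 1 := Real.log_le_sub_one_of_pos hu0
    have hlogK : Real.log K = Real.log u - Real.log l2 := by
      rw [hKu, Real.log_div (ne_of_gt hu0) (ne_of_gt hl20)]
    have hlogl2 : -Real.log l2 ≤ l2⁻¹ - 1 := by
      have := Real.log_le_sub_one_of_pos (show (0:ℝ) < l2⁻¹ by positivity)
      rwa [Real.log_inv] at this
    have hinv : l2⁻¹ ≤ 1.4428 := by
      rw [inv_le_comm₀ hl20 (by norm_num)]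
      linarith
    rw [hsplit, hlogK]
    have hck : c' * K * l2 = c' * u := by rw [mul_assoc, hKl2]
    rw [hck]
    have hml2 : -Real.log l2 ≤ 0.4428 := by linarith
    have hu27 : (2.7724 : ℝ) ≤ u := by linarith
    have key : 0 ≤ (c' - 5) * (u - 2.7724) :=
      mul_nonneg (by linarith) (by linarith)
    linarith [key, hml2, hlogc, hlogu, hl2b, hu27, hc'5]
  have hexp : (r : ℝ) * Real.log y ≤ t * Real.log 2 := by
    have hm : (r : ℝ) * Real.log y ≤ x * Real.log (2 * e * (n:ℝ) / x) := by
      rw [hy_def]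
      apply aux_mono hrpos hrx
      rw [he_def]
      have h1 := mul_le_mul_of_nonneg_left hxn (Real.exp_pos 1).le
      have h2 : (0:ℝ) ≤ Real.exp 1 * (n:ℝ) := mul_nonneg (Real.exp_pos 1).le hnpos.le
      linarith
    refine le_trans hm ?_
    rw [hcx]
    have h1 : x * Real.log (2 * e * c' * K * s) ≤ x * (c' * K * Real.log 2) :=
      mul_le_mul_of_nonneg_left hcore hx0.le
    refine le_trans h1 (le_of_eq ?_)
    rw [hx_def]
    field_simp
  calc (((r + n - 1).choose r : ℕ) : ℝ) ≤ (2 * (n:ℝ)) ^ r / (r ! : ℝ) := hA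
    _ ≤ y ^ r := hB
    _ = Real.exp ((r : ℝ) * Real.log y) := by
        rw [Real.exp_nat_mul, Real.exp_log hy0]
    _ ≤ Real.exp (t * Real.log 2) := Real.exp_le_exp.mpr hexp
    _ = L := by
        rw [ht_def, Real.logb, div_mul_cancel₀ _ (ne_of_gt (Real.log_pos (by norm_num)))]
        exact Real.exp_log hLpos
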